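/- Let n ≥ 1, let Q be an n×n real matrix with nonnegative entries and zero diagonal, let x ∈ ℝⁿ, and suppose the feasible set F(x) is nonempty. Then for every vector a ∈ ℝⁿ with strictly positive entries, the linear functional z ↦ aᵀz attains its minimum over F(x), and the minimizer is unique. -/
import Mathlib


open Matrix Finset Filter

/-- Negative part: `(a)₋ = max(0, −a)`. -/
noncomputable def nPart (a : ℝ) : ℝ := max 0 (-a)

/-- The jump system JS(x): `z i = (x i − ∑_{j ≠ i} Q i j * z j)₋` for all `i`. -/
noncomputable def JS {n : ℕ} (Q : Matrix (Fin n) (Fin n) ℝ) (x z : Fin n → ℝ) : Prop :=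
  ∀ i, z i = nPart (x i - ∑ j ∈ Finset.univ.erase i, Q i j * z j)

/-- The cone `C = {u : u ≥ 0 and uᵀ(I − Q) ≤ 0 componentwise}`. -/
def coneC {n : ℕ} (Q : Matrix (Fin n) (Fin n) ℝ) : Set (Fin n → ℝ) :=
  {u | (∀ i, 0 ≤ u i) ∧ ∀ j, Matrix.vecMul u (1 - Q) j ≤ 0}

/-- The dual cone `C* = {y : uᵀ y ≥ 0 for all u ∈ C}`. -/
def dualConeC {n : ℕ} (Q : Matrix (Fin n) (Fin n) ℝ) : Set (Fin n → ℝ) :=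
  {y | ∀ u ∈ coneC Q, 0 ≤ ∑ i, u i * y i}

/-- The feasible set `F(x) = {z : z ≥ 0 and (I − Q) z ≥ −x componentwise}`. -/
def feas {n : ℕ} (Q : Matrix (Fin n) (Fin n) ℝ) (x : Fin n → ℝ) : Set (Fin n → ℝ) :=
  {z | (∀ i, 0 ≤ z i) ∧ ∀ i, -(x i) ≤ Matrix.mulVec (1 - Q) z i}

lemma mulVec_sub_form {n : ℕ} (Q : Matrix (Fin n) (Fin n) ℝ) (z : Fin n → ℝ) (i : Fin n) :
    Matrix.mulVec (1 - Q) z i = z i - ∑ j, Q i j * z j := by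
  rw [Matrix.sub_mulVec]
  simp [Matrix.one_mulVec, Matrix.mulVec, dotProduct]

/-- F is closed under componentwise min. -/
lemma feas_min {n : ℕ} (Q : Matrix (Fin n) (Fin n) ℝ) (hQ : ∀ i j, 0 ≤ Q i j)
    (x : Fin n → ℝ) {z1 z2 : Fin n → ℝ} (h1 : z1 ∈ feas Q x) (h2 : z2 ∈ feas Q x) :
    (fun i => min (z1 i) (z2 i)) ∈ feas Q x := by
  refine ⟨fun i => le_min (h1.1 i) (h2.1 i), fun i => ?_⟩
  rw [mulVec_sub_form]
  rcases le_total (z1 i) (z2 i) with h | h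
  · have hb := h1.2 i
    rw [mulVec_sub_form] at hb
    have hs : ∑ j, Q i j * min (z1 j) (z2 j) ≤ ∑ j, Q i j * z1 j :=
      Finset.sum_le_sum fun j _ => mul_le_mul_of_nonneg_left (min_le_left _ _) (hQ i j)
    simp only [min_eq_left h]
    linarith
  · have hb := h2.2 i
    rw [mulVec_sub_form] at hb
    have hs : ∑ j, Q i j * min (z1 j) (z2 j) ≤ ∑ j, Q i j * z2 j :=
      Finset.sum_le_sum fun j _ => mul_le_mul_of_nonneg_left (min_le_right _ _) (hQ i j)
    simp only [min_eq_right h]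
    linarith


/-- If `F(x)` is nonempty then for every strictly positive `a` the linear functional
`z ↦ aᵀz` attains its minimum over `F(x)` at a unique point. -/
theorem lp_unique_minimizer {n : ℕ} (hn : 1 ≤ n)
    (Q : Matrix (Fin n) (Fin n) ℝ)
    (hQnonneg : ∀ i j, 0 ≤ Q i j) (hQdiag : ∀ i, Q i i = 0)
    (x : Fin n → ℝ) (hne : (feas Q x).Nonempty)
    (a : Fin n → ℝ) (ha : ∀ i, 0 < a i) :
    ∃! zstar : Fin n → ℝ, zstar ∈ feas Q x ∧
      ∀ z ∈ feas Q x, ∑ i, a i * zstar i ≤ ∑ i, a i * z i := by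
  obtain ⟨z0, hz0⟩ := hne
  set f : (Fin n → ℝ) → ℝ := fun z => ∑ i, a i * z i with hf
  have hfcont : Continuous f := by
    apply continuous_finset_sum
    exact fun i _ => (continuous_const.mul (continuous_apply i))
  set c : ℝ := f z0 with hc
  have hfeas_closed : IsClosed (feas Q x) := by
    have h1 : IsClosed {z : Fin n → ℝ | ∀ i, 0 ≤ z i} := by
      rw [Set.setOf_forall]
      exact isClosed_iInter fun i => isClosed_le continuous_const (continuous_apply i)
    have h2 : IsClosed {z : Fin n → ℝ | ∀ i, -(x i) ≤ Matrix.mulVec (1 - Q) z i} := by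
      rw [Set.setOf_forall]
      refine isClosed_iInter fun i => isClosed_le continuous_const ?_
      have : Continuous fun z : Fin n → ℝ => z i - ∑ j, Q i j * z j := by
        exact (continuous_apply i).sub (continuous_finset_sum _ fun j _ =>
          continuous_const.mul (continuous_apply j))
      simpa only [mulVec_sub_form] using this
    have : feas Q x = {z : Fin n → ℝ | ∀ i, 0 ≤ z i} ∩
        {z : Fin n → ℝ | ∀ i, -(x i) ≤ Matrix.mulVec (1 - Q) z i} := by
      ext z; exact ⟨fun h => ⟨h.1, h.2⟩, fun h => ⟨h.1, h.2⟩⟩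
    rw [this]; exact h1.inter h2
  -- the compact sublevel set
  set K : Set (Fin n → ℝ) := feas Q x ∩ {z | f z ≤ c} with hK
  have hz0K : z0 ∈ K := ⟨hz0, le_refl c⟩
  have hKclosed : IsClosed K := hfeas_closed.inter (isClosed_le hfcont continuous_const)
  have hcnonneg : 0 ≤ c := Finset.sum_nonneg fun i _ => mul_nonneg (ha i).le (hz0.1 i)
  have hKsub : K ⊆ Set.Icc (0 : Fin n → ℝ) (fun i => c / a i) := by
    rintro z ⟨hzf, hzc⟩
    refine ⟨fun i => hzf.1 i, fun i => ?_⟩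
    have hterm : a i * z i ≤ c := by
      calc a i * z i ≤ f z := Finset.single_le_sum
            (f := fun j => a j * z j) (fun j _ => mul_nonneg (ha j).le (hzf.1 j))
            (Finset.mem_univ i)
        _ ≤ c := hzc
    rw [le_div_iff₀ (ha i)]
    linarith [mul_comm (a i) (z i)]
  have hKcompact : IsCompact K :=
    (isCompact_Icc).of_isClosed_subset hKclosed hKsub
  obtain ⟨zstar, hzstarK, hmin⟩ := hKcompact.exists_isMinOn ⟨z0, hz0K⟩ hfcont.continuousOn
  have hglobal : ∀ z ∈ feas Q x, f zstar ≤ f z := by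
    intro z hz
    rcases le_or_gt (f z) c with h | h
    · exact hmin ⟨hz, h⟩
    · exact le_trans (hmin hz0K) h.le
  refine ⟨zstar, ⟨hzstarK.1, hglobal⟩, ?_⟩
  rintro y ⟨hy, hymin⟩
  -- uniqueness via min-closure
  have hw := feas_min Q hQnonneg x hy hzstarK.1
  set w : Fin n → ℝ := fun i => min (y i) (zstar i) with hwdef
  have hfyz : f y = f zstar := le_antisymm (hymin zstar hzstarK.1) (hglobal y hy)
  have hwy : f w ≤ f y := Finset.sum_le_sum fun i _ =>
    mul_le_mul_of_nonneg_left (min_le_left _ _) (ha i).le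
  have hyw : f y ≤ f w := hymin w hw
  have hww : f w = f y := le_antisymm hwy hyw
  -- termwise: a i * (y i - w i) = 0
  have hzero : ∀ i ∈ Finset.univ, a i * (y i - w i) = 0 := by
    have hsum : ∑ i, a i * (y i - w i) = 0 := by
      have : ∑ i, a i * (y i - w i) = f y - f w := by
        simp [hf, mul_sub, Finset.sum_sub_distrib]
      rw [this, hww]; ring
    refine (Finset.sum_eq_zero_iff_of_nonneg fun i _ => ?_).mp hsum
    exact mul_nonneg (ha i).le (sub_nonneg.mpr (min_le_left _ _))
  have hyle : ∀ i, y i ≤ zstar i := by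
    intro i
    have := hzero i (Finset.mem_univ i)
    have h2 : y i = w i := by
      rcases mul_eq_zero.mp this with h | h
      · exact absurd h (ha i).ne'
      · linarith [sub_eq_zero.mp h]
    rw [h2]; exact min_le_right _ _
  -- symmetric: zstar ≤ y
  have hwz : f w ≤ f zstar := Finset.sum_le_sum fun i _ =>
    mul_le_mul_of_nonneg_left (min_le_right _ _) (ha i).le
  have hzw : f zstar ≤ f w := hglobal w hw
  have hww2 : f w = f zstar := le_antisymm hwz hzw
  have hzero2 : ∀ i ∈ Finset.univ, a i * (zstar i - w i) = 0 := by
    have hsum : ∑ i, a i * (zstar i - w i) = 0 := by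
      have : ∑ i, a i * (zstar i - w i) = f zstar - f w := by
        simp [hf, mul_sub, Finset.sum_sub_distrib]
      rw [this, hww2]; ring
    refine (Finset.sum_eq_zero_iff_of_nonneg fun i _ => ?_).mp hsum
    exact mul_nonneg (ha i).le (sub_nonneg.mpr (min_le_right _ _))
  have hzle : ∀ i, zstar i ≤ y i := by
    intro i
    have := hzero2 i (Finset.mem_univ i)
    have h2 : zstar i = w i := by
      rcases mul_eq_zero.mp this with h | h
      · exact absurd h (ha i).ne'
      · linarith [sub_eq_zero.mp h]
    rw [h2]; exact min_le_left _ _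
  funext i
  exact le_antisymm (hyle i) (hzle i)
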